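/- The Coulomb integral of two normalized spherical Gaussian charge distributions centered at A and B with exponents α, β > 0 equals erf(√(αβ/(α+β))·‖A-B‖)/‖A-B‖ when A ≠ B; in particular it is bounded above by 1/‖A-B‖ and is asymptotic to 1/‖A-B‖ as ‖A-B‖ → ∞. -/

import Mathlib

open Real Filter MeasureTheory Complex
open scoped RealInnerProductSpace ENNReal

local notation "E3" => EuclideanSpace ℝ (Fin 3)

/-- The error function. -/
noncomputable def erf (x : ℝ) : ℝ := (2 / Real.sqrt π) * ∫ t in (0 : ℝ)..x, Real.exp (-t ^ 2)

/-- The normalized spherical Gaussian density with exponent γ centered at C. -/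
noncomputable def gaussDensity (γ : ℝ) (C x : EuclideanSpace ℝ (Fin 3)) : ℝ :=
  (γ / π) ^ ((3 : ℝ) / 2) * Real.exp (-γ * ‖x - C‖ ^ 2)

/-- The Coulomb integral of two normalized Gaussian densities. -/
noncomputable def coulombJ (α β : ℝ) (A B : EuclideanSpace ℝ (Fin 3)) : ℝ :=
  ∫ x : EuclideanSpace ℝ (Fin 3), ∫ y : EuclideanSpace ℝ (Fin 3),
    gaussDensity α A x * gaussDensity β B y / ‖x - y‖


lemma cexp_real_eq (r : ℝ) : cexp ((r : ℂ)) = ((rexp r : ℝ) : ℂ) := by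
  rw [Complex.ofReal_exp]

lemma integrable_rexp_neg_mul_sq_norm_add {b : ℝ} (hb : 0 < b) (w : E3) :
    Integrable (fun v : E3 => rexp (-b * ‖v‖ ^ 2 + ⟪w, v⟫)) := by
  have h := (GaussianFourier.integrable_cexp_neg_mul_sq_norm_add
    (b := (b : ℂ)) (by simpa using hb) 1 w).norm
  refine h.congr (Filter.Eventually.of_forall fun v => ?_)
  simp only
  rw [show (-(b:ℂ) * (‖v‖:ℂ) ^ 2 + 1 * ((⟪w, v⟫ : ℝ) : ℂ))
      = ((-b * ‖v‖ ^ 2 + ⟪w, v⟫ : ℝ) : ℂ) by push_cast; ring, cexp_real_eq,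
    Complex.norm_real, Real.norm_eq_abs, abs_of_pos (Real.exp_pos _)]

lemma integral_rexp_neg_mul_sq_norm_add {b : ℝ} (hb : 0 < b) (w : E3) :
    ∫ v : E3, rexp (-b * ‖v‖ ^ 2 + ⟪w, v⟫)
      = (π / b) ^ ((3:ℝ) / 2) * rexp (‖w‖ ^ 2 / (4 * b)) := by
  have h := GaussianFourier.integral_cexp_neg_mul_sq_norm_add
    (b := (b : ℂ)) (by simpa using hb) 1 w
  rw [show ∫ v : E3, cexp (-(b:ℂ) * (‖v‖:ℂ) ^ 2 + 1 * ((⟪w, v⟫ : ℝ) : ℂ))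
      = ∫ v : E3, ((rexp (-b * ‖v‖ ^ 2 + ⟪w, v⟫) : ℝ) : ℂ) from ?_] at h
  · replace h := (integral_ofReal (𝕜 := ℂ)
      (f := fun v : E3 => rexp (-b * ‖v‖ ^ 2 + ⟪w, v⟫))).symm.trans h
    rw [finrank_euclideanSpace_fin] at h
    rw [show ((3:ℕ) / 2 : ℂ) = (((3:ℝ)/2 : ℝ) : ℂ) by norm_num] at h
    rw [show ((π:ℂ) / (b:ℂ)) = ((π / b : ℝ) : ℂ) by push_cast; ring] at h
    rw [← Complex.ofReal_cpow (by positivity)] at h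
    rw [show ((1:ℂ) ^ 2 * (‖w‖:ℂ) ^ 2 / (4 * (b:ℂ))) = ((‖w‖ ^ 2 / (4 * b) : ℝ) : ℂ) by
      push_cast; ring, cexp_real_eq] at h
    rw [← Complex.ofReal_mul] at h
    exact Complex.ofReal_injective h
  · congr 1; funext v
    rw [show (-(b:ℂ) * (‖v‖:ℂ) ^ 2 + 1 * ((⟪w, v⟫ : ℝ) : ℂ))
        = ((-b * ‖v‖ ^ 2 + ⟪w, v⟫ : ℝ) : ℂ) by push_cast; ring, cexp_real_eq]



lemma expo_eq (p q : ℝ) (c d y : E3) :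
    -(p * ‖y - c‖ ^ 2) - q * ‖y - d‖ ^ 2
      = (-(p + q) * ‖y‖ ^ 2 + ⟪(2 * p) • c + (2 * q) • d, y⟫)
        - (p * ‖c‖ ^ 2 + q * ‖d‖ ^ 2) := by
  rw [norm_sub_sq_real, norm_sub_sq_real, inner_add_left, real_inner_smul_left,
    real_inner_smul_left, real_inner_comm c y, real_inner_comm d y]
  ring

lemma gaussE_integrable {p q : ℝ} (hp : 0 < p) (hq : 0 ≤ q) (c d : E3) :
    Integrable (fun y : E3 => rexp (-(p * ‖y - c‖ ^ 2) - q * ‖y - d‖ ^ 2)) := by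
  have h := (integrable_rexp_neg_mul_sq_norm_add (b := p + q) (by linarith)
    ((2 * p) • c + (2 * q) • d)).const_mul (rexp (-(p * ‖c‖ ^ 2 + q * ‖d‖ ^ 2)))
  refine h.congr (Filter.Eventually.of_forall fun y => ?_)
  simp only
  rw [← Real.exp_add]
  congr 1
  rw [expo_eq p q c d y]
  ring

lemma gaussE {p q : ℝ} (hp : 0 < p) (hq : 0 ≤ q) (c d : E3) :
    ∫ y : E3, rexp (-(p * ‖y - c‖ ^ 2) - q * ‖y - d‖ ^ 2)
      = (π / (p + q)) ^ ((3:ℝ) / 2) * rexp (-(p * q / (p + q)) * ‖c - d‖ ^ 2) := by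
  have hpq : 0 < p + q := by linarith
  have h1 : ∀ y : E3, rexp (-(p * ‖y - c‖ ^ 2) - q * ‖y - d‖ ^ 2)
      = rexp (-(p * ‖c‖ ^ 2 + q * ‖d‖ ^ 2))
        * rexp (-(p + q) * ‖y‖ ^ 2 + ⟪(2 * p) • c + (2 * q) • d, y⟫) := by
    intro y
    rw [← Real.exp_add]
    congr 1
    rw [expo_eq p q c d y]
    ring
  simp_rw [h1]
  rw [integral_const_mul, integral_rexp_neg_mul_sq_norm_add hpq]
  rw [← mul_assoc, mul_comm (rexp _), mul_assoc, ← Real.exp_add]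
  congr 1
  have hw : ‖(2 * p) • c + (2 * q) • d‖ ^ 2
      = (2 * p) ^ 2 * ‖c‖ ^ 2 + 2 * ((2 * p) * (2 * q)) * ⟪c, d⟫ + (2 * q) ^ 2 * ‖d‖ ^ 2 := by
    rw [norm_add_sq_real, real_inner_smul_left, real_inner_smul_right, norm_smul, norm_smul,
      mul_pow, mul_pow]
    simp only [Real.norm_eq_abs, _root_.sq_abs]
    ring
  have hcd : ‖c - d‖ ^ 2 = ‖c‖ ^ 2 - 2 * ⟪c, d⟫ + ‖d‖ ^ 2 := norm_sub_sq_real c d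
  rw [hw, hcd]
  rw [Real.exp_eq_exp]
  field_simp
  ring



lemma one_div_expand {r : ℝ} (hr : 0 < r) {C : ℝ} (hC : 0 ≤ C) :
    ENNReal.ofReal (C / r)
      = ∫⁻ t in Set.Ioi (0:ℝ), ENNReal.ofReal ((2 / Real.sqrt π) * C * rexp (-(r ^ 2) * t ^ 2)) := by
  have hint : IntegrableOn (fun t : ℝ => (2 / Real.sqrt π) * C * rexp (-(r ^ 2) * t ^ 2))
      (Set.Ioi 0) := ((integrable_exp_neg_mul_sq (by positivity : (0:ℝ) < r ^ 2)).const_mul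
        _).integrableOn
  rw [← MeasureTheory.ofReal_integral_eq_lintegral_ofReal hint
    (Filter.Eventually.of_forall fun t => by positivity)]
  congr 1
  rw [integral_const_mul, integral_gaussian_Ioi]
  have h1 : Real.sqrt (π / r ^ 2) = Real.sqrt π / r := by
    rw [Real.sqrt_div pi_pos.le, Real.sqrt_sq hr.le]
  rw [h1]
  have h2 : Real.sqrt π ≠ 0 := by positivity
  field_simp

lemma rpow_three_div_two {x : ℝ} (hx : 0 ≤ x) : x ^ ((3:ℝ)/2) = x ^ ((1:ℝ)/2) * x := by
  rcases hx.eq_or_lt with h | h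
  · rw [← h, Real.zero_rpow (by norm_num), Real.zero_rpow (by norm_num), zero_mul]
  · rw [show (3:ℝ)/2 = 1/2 + 1 by norm_num, Real.rpow_add_one h.ne']

lemma integrable_gen {a b c : ℝ} (ha : 0 < a) (hb : 0 < b) (hc : 0 < c)
    {e : ℝ → ℝ} (he : Continuous e) (he0 : ∀ t, e t ≤ 0) :
    IntegrableOn (fun t : ℝ => (a / (b + c * t ^ 2)) ^ ((3:ℝ)/2) * rexp (e t))
      (Set.Ioi 0) := by
  set C : ℝ := (a / b) ^ ((1:ℝ)/2) * (a / min b c) with hC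
  have hmin : 0 < min b c := lt_min hb hc
  refine Integrable.mono' ((integrable_inv_one_add_sq.const_mul C).integrableOn
    (s := Set.Ioi 0)) ?_ (Filter.Eventually.of_forall fun t => ?_)
  · refine Continuous.aestronglyMeasurable ?_ |>.restrict
    refine Continuous.mul ?_ (Real.continuous_exp.comp he)
    refine Continuous.rpow_const ?_ (fun t => Or.inr (by norm_num))
    refine continuous_const.div (by continuity) (fun t => ?_)
    positivity
  · have hu : (0:ℝ) < b + c * t ^ 2 := by positivity
    have hau : 0 ≤ a / (b + c * t ^ 2) := by positivity
    rw [Real.norm_eq_abs, _root_.abs_of_nonneg (by positivity)]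
    have h1 : (a / (b + c * t ^ 2)) ^ ((3:ℝ)/2) * rexp (e t)
        ≤ (a / (b + c * t ^ 2)) ^ ((3:ℝ)/2) * 1 :=
      mul_le_mul_of_nonneg_left (Real.exp_le_one_iff.mpr (he0 t)) (by positivity)
    refine h1.trans ?_
    rw [mul_one, rpow_three_div_two hau]
    have h2 : a / (b + c * t ^ 2) ≤ a / b := by
      apply div_le_div_of_nonneg_left ha.le hb; nlinarith
    have h3 : a / (b + c * t ^ 2) ≤ (a / min b c) * (1 + t ^ 2)⁻¹ := by
      rw [← div_eq_mul_inv, div_div]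
      apply div_le_div_of_nonneg_left ha.le (by positivity)
      have : min b c * (1 + t ^ 2) = min b c + min b c * t ^ 2 := by ring
      rw [this]
      gcongr
      · exact min_le_left _ _
      · exact min_le_right _ _
    calc (a / (b + c * t ^ 2)) ^ ((1:ℝ)/2) * (a / (b + c * t ^ 2))
        ≤ (a / b) ^ ((1:ℝ)/2) * ((a / min b c) * (1 + t ^ 2)⁻¹) := by
          apply mul_le_mul (Real.rpow_le_rpow hau h2 (by norm_num)) h3 hau (by positivity)
      _ = C * (1 + t ^ 2)⁻¹ := by rw [hC]; ring



@[fun_prop]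
lemma continuous_gaussDensity (γ : ℝ) (C : E3) : Continuous (gaussDensity γ C) := by
  unfold gaussDensity
  fun_prop

lemma gaussDensity_nonneg {γ : ℝ} (hγ : 0 < γ) (C x : E3) : 0 ≤ gaussDensity γ C x := by
  unfold gaussDensity
  have : (0:ℝ) ≤ (γ / π) ^ ((3 : ℝ) / 2) := Real.rpow_nonneg (by positivity) _
  positivity

section main
variable {α β : ℝ} (hα : 0 < α) (hβ : 0 < β) (A B : E3)

lemma coulombJ_eq_integral (hα : 0 < α) (hβ : 0 < β) (A B : E3) :
    coulombJ α β A B = ∫ t in Set.Ioi (0:ℝ),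
      (2 / Real.sqrt π) * ((α * β / (α * β + (α + β) * t ^ 2)) ^ ((3:ℝ)/2)
        * rexp (-(α * β * t ^ 2 / (α * β + (α + β) * t ^ 2)) * ‖A - B‖ ^ 2)) := by
  set f := gaussDensity α A with hf
  set g := gaussDensity β B with hg
  have hfc : Continuous f := continuous_gaussDensity α A
  have hgc : Continuous g := continuous_gaussDensity β B
  have hfn : ∀ x, 0 ≤ f x := gaussDensity_nonneg hα A
  have hgn : ∀ y, 0 ≤ g y := gaussDensity_nonneg hβ B
  set cα : ℝ := (α / π) ^ ((3:ℝ)/2) with hcα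
  set cβ : ℝ := (β / π) ^ ((3:ℝ)/2) with hcβ
  have hcβn : 0 ≤ cβ := Real.rpow_nonneg (by positivity) _
  -- ψ x t
  set ψ : E3 → ℝ → ℝ := fun x t =>
    ((2 / Real.sqrt π) * f x * cβ)
      * ((π / (β + t ^ 2)) ^ ((3:ℝ)/2)
          * rexp (-(β * t ^ 2 / (β + t ^ 2)) * ‖x - B‖ ^ 2)) with hψ
  set I : ℝ → ℝ := fun t =>
    (2 / Real.sqrt π) * ((α * β / (α * β + (α + β) * t ^ 2)) ^ ((3:ℝ)/2)
      * rexp (-(α * β * t ^ 2 / (α * β + (α + β) * t ^ 2)) * ‖A - B‖ ^ 2)) with hI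
  have hψnn : ∀ x t, 0 ≤ ψ x t := by
    intro x t
    have h1 : (0:ℝ) ≤ (π / (β + t ^ 2)) ^ ((3:ℝ)/2) := Real.rpow_nonneg (by positivity) _
    have := hfn x
    positivity
  -- integrability of ψ x on Ioi 0
  have hψint : ∀ x : E3, IntegrableOn (ψ x) (Set.Ioi 0) := by
    intro x
    have he : Continuous fun t : ℝ => -(β * t ^ 2 / (β + t ^ 2)) * ‖x - B‖ ^ 2 := by
      apply Continuous.mul _ continuous_const
      apply Continuous.neg
      apply Continuous.div (by fun_prop) (by fun_prop)
      intro t; positivity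
    have he0 : ∀ t : ℝ, -(β * t ^ 2 / (β + t ^ 2)) * ‖x - B‖ ^ 2 ≤ 0 := by
      intro t
      apply mul_nonpos_of_nonpos_of_nonneg _ (by positivity)
      have : 0 ≤ β * t ^ 2 / (β + t ^ 2) := by positivity
      linarith
    have h := (integrable_gen pi_pos hβ one_pos he he0).const_mul
      ((2 / Real.sqrt π) * f x * cβ)
    simp only [one_mul] at h
    exact h.congr (Filter.Eventually.of_forall fun t => rfl)
  -- Step L2
  have L2 : ∀ x : E3, (∫⁻ y : E3, ENNReal.ofReal (f x * g y / ‖x - y‖))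
      = ∫⁻ t in Set.Ioi (0:ℝ), ENNReal.ofReal (ψ x t) := by
    intro x
    have hae : ∀ᵐ y : E3, y ≠ x := by
      rw [MeasureTheory.ae_iff]
      simp only [ne_eq, not_not, Set.setOf_eq_eq_singleton]
      exact measure_singleton x
    have step1 : (∫⁻ y : E3, ENNReal.ofReal (f x * g y / ‖x - y‖))
        = ∫⁻ y : E3, ∫⁻ t in Set.Ioi (0:ℝ),
            ENNReal.ofReal ((2 / Real.sqrt π) * (f x * g y) * rexp (-(‖x - y‖ ^ 2) * t ^ 2)) := by
      refine lintegral_congr_ae (hae.mono fun y hy => ?_)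
      have hr : 0 < ‖x - y‖ := by
        rw [norm_pos_iff, sub_ne_zero]; exact fun h => hy h.symm
      exact one_div_expand hr (mul_nonneg (hfn x) (hgn y))
    rw [step1]
    have hswap : (∫⁻ y : E3, ∫⁻ t in Set.Ioi (0:ℝ),
          ENNReal.ofReal ((2 / Real.sqrt π) * (f x * g y) * rexp (-(‖x - y‖ ^ 2) * t ^ 2)))
        = ∫⁻ t in Set.Ioi (0:ℝ), ∫⁻ y : E3,
            ENNReal.ofReal ((2 / Real.sqrt π) * (f x * g y) * rexp (-(‖x - y‖ ^ 2) * t ^ 2)) := by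
      apply lintegral_lintegral_swap
      apply Measurable.aemeasurable
      apply Measurable.ennreal_ofReal
      have : Continuous fun p : E3 × ℝ =>
          (2 / Real.sqrt π) * (f x * g p.1) * rexp (-(‖x - p.1‖ ^ 2) * p.2 ^ 2) := by fun_prop
      exact this.measurable
    rw [hswap]
    have inner_eq : ∀ t : ℝ, (∫⁻ y : E3,
        ENNReal.ofReal ((2 / Real.sqrt π) * (f x * g y) * rexp (-(‖x - y‖ ^ 2) * t ^ 2)))
        = ENNReal.ofReal (ψ x t) := by
      intro t
      have hfun : ∀ y : E3, (2 / Real.sqrt π) * (f x * g y) * rexp (-(‖x - y‖ ^ 2) * t ^ 2)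
          = ((2 / Real.sqrt π) * f x * cβ)
              * rexp (-(β * ‖y - B‖ ^ 2) - t ^ 2 * ‖y - x‖ ^ 2) := by
        intro y
        rw [hg]; unfold gaussDensity
        rw [← hcβ, norm_sub_rev x y]
        rw [show -(β * ‖y - B‖ ^ 2) - t ^ 2 * ‖y - x‖ ^ 2
            = (-β * ‖y - B‖ ^ 2) + (-(‖y - x‖ ^ 2) * t ^ 2) by ring, Real.exp_add]
        ring
      simp_rw [hfun]
      rw [← MeasureTheory.ofReal_integral_eq_lintegral_ofReal
        ((gaussE_integrable hβ (sq_nonneg t) B x).const_mul _)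
        (Filter.Eventually.of_forall fun y => mul_nonneg (mul_nonneg (mul_nonneg
          (by positivity) (hfn x)) hcβn) (Real.exp_pos _).le)]
      rw [MeasureTheory.integral_const_mul, gaussE hβ (sq_nonneg t) B x, norm_sub_rev B x]
    rw [lintegral_congr fun t => inner_eq t]
  have L2' : ∀ x : E3, (∫⁻ t in Set.Ioi (0:ℝ), ENNReal.ofReal (ψ x t))
      = ENNReal.ofReal (∫ t in Set.Ioi (0:ℝ), ψ x t) :=
    fun x => (MeasureTheory.ofReal_integral_eq_lintegral_ofReal (hψint x)
      (Filter.Eventually.of_forall fun t => hψnn x t)).symm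
  -- Step L4
  have L4 : ∀ t : ℝ, (∫⁻ x : E3, ENNReal.ofReal (ψ x t)) = ENNReal.ofReal (I t) := by
    intro t
    have hbt : (0:ℝ) < β + t ^ 2 := by positivity
    have hν0 : (0:ℝ) ≤ β * t ^ 2 / (β + t ^ 2) := by positivity
    have hνlt : (0:ℝ) < α + β * t ^ 2 / (β + t ^ 2) := by positivity
    have hden : (0:ℝ) < α * β + (α + β) * t ^ 2 := by positivity
    have hfun : ∀ x : E3, ψ x t
        = ((2 / Real.sqrt π) * cα * cβ * (π / (β + t ^ 2)) ^ ((3:ℝ)/2))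
            * rexp (-(α * ‖x - A‖ ^ 2) - (β * t ^ 2 / (β + t ^ 2)) * ‖x - B‖ ^ 2) := by
      intro x
      rw [hψ]
      simp only
      rw [hf]; unfold gaussDensity; rw [← hcα]
      rw [show -(α * ‖x - A‖ ^ 2) - (β * t ^ 2 / (β + t ^ 2)) * ‖x - B‖ ^ 2
          = (-α * ‖x - A‖ ^ 2) + (-(β * t ^ 2 / (β + t ^ 2)) * ‖x - B‖ ^ 2) by ring,
        Real.exp_add]
      ring
    simp_rw [hfun]
    rw [← MeasureTheory.ofReal_integral_eq_lintegral_ofReal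
      ((gaussE_integrable hα hν0 A B).const_mul _)
      (Filter.Eventually.of_forall fun x => mul_nonneg (mul_nonneg (mul_nonneg (mul_nonneg
        (by positivity) (Real.rpow_nonneg (by positivity) _)) hcβn)
        (Real.rpow_nonneg (by positivity) _)) (Real.exp_pos _).le)]
    rw [MeasureTheory.integral_const_mul, gaussE hα hν0 A B]
    congr 1
    have hb : α * (β * t ^ 2 / (β + t ^ 2)) / (α + β * t ^ 2 / (β + t ^ 2))
        = α * β * t ^ 2 / (α * β + (α + β) * t ^ 2) := by
      field_simp
      ring
    have ha : cα * (cβ * ((π / (β + t ^ 2)) ^ ((3:ℝ)/2)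
        * (π / (α + β * t ^ 2 / (β + t ^ 2))) ^ ((3:ℝ)/2)))
        = (α * β / (α * β + (α + β) * t ^ 2)) ^ ((3:ℝ)/2) := by
      rw [hcα, hcβ, ← Real.mul_rpow (by positivity) (by positivity),
        ← Real.mul_rpow (by positivity) (by positivity),
        ← Real.mul_rpow (by positivity) (by positivity)]
      congr 1
      field_simp
      ring
    rw [hI]
    simp only
    rw [hb, ← ha]
    ring
  -- integrability of I on Ioi 0
  have hIint : IntegrableOn I (Set.Ioi (0:ℝ)) := by
    have he : Continuous fun t : ℝ =>
        -(α * β * t ^ 2 / (α * β + (α + β) * t ^ 2)) * ‖A - B‖ ^ 2 := by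
      apply Continuous.mul _ continuous_const
      apply Continuous.neg
      apply Continuous.div (by fun_prop) (by fun_prop)
      intro t; positivity
    have he0 : ∀ t : ℝ, -(α * β * t ^ 2 / (α * β + (α + β) * t ^ 2)) * ‖A - B‖ ^ 2 ≤ 0 := by
      intro t
      apply mul_nonpos_of_nonpos_of_nonneg _ (by positivity)
      have : (0:ℝ) ≤ α * β * t ^ 2 / (α * β + (α + β) * t ^ 2) := by positivity
      linarith
    have h := (integrable_gen (mul_pos hα hβ) (mul_pos hα hβ) (by positivity : (0:ℝ) < α + β)
      he he0).const_mul (2 / Real.sqrt π)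
    exact h.congr (Filter.Eventually.of_forall fun t => rfl)
  have hInn : ∀ t, 0 ≤ I t := by
    intro t
    rw [hI]
    simp only
    have : (0:ℝ) ≤ (α * β / (α * β + (α + β) * t ^ 2)) ^ ((3:ℝ)/2) :=
      Real.rpow_nonneg (by positivity) _
    positivity
  -- measurability
  have m2 : Measurable fun p : E3 × E3 => f p.1 * g p.2 / ‖p.1 - p.2‖ :=
    ((hfc.comp continuous_fst).mul (hgc.comp continuous_snd)).measurable.div
      ((continuous_fst.sub continuous_snd).norm.measurable)
  have hK : Measurable (Function.uncurry fun x y : E3 =>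
      ENNReal.ofReal (f x * g y / ‖x - y‖)) := m2.ennreal_ofReal
  -- assembly
  have inner_int_eq : ∀ x : E3, (∫ y : E3, f x * g y / ‖x - y‖)
      = (∫⁻ y : E3, ENNReal.ofReal (f x * g y / ‖x - y‖)).toReal := fun x =>
    integral_eq_lintegral_of_nonneg_ae
      (Filter.Eventually.of_forall fun y =>
        div_nonneg (mul_nonneg (hfn x) (hgn y)) (norm_nonneg _))
      ((m2.comp measurable_prodMk_left).aestronglyMeasurable)
  have step_outer : coulombJ α β A B
      = (∫⁻ x : E3, ENNReal.ofReal
          ((∫⁻ y : E3, ENNReal.ofReal (f x * g y / ‖x - y‖)).toReal)).toReal := by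
    unfold coulombJ
    rw [← hf, ← hg]
    simp_rw [inner_int_eq]
    exact integral_eq_lintegral_of_nonneg_ae
      (Filter.Eventually.of_forall fun x => ENNReal.toReal_nonneg)
      ((hK.lintegral_prod_right).ennreal_toReal.aestronglyMeasurable)
  have hfin : ∀ x : E3, (∫⁻ y : E3, ENNReal.ofReal (f x * g y / ‖x - y‖)) ≠ ⊤ := by
    intro x
    rw [L2 x, L2' x]
    exact ENNReal.ofReal_ne_top
  rw [step_outer]
  rw [lintegral_congr fun x => ENNReal.ofReal_toReal (hfin x)]
  rw [lintegral_congr fun x => L2 x]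
  have hswap2 : (∫⁻ x : E3, ∫⁻ t in Set.Ioi (0:ℝ), ENNReal.ofReal (ψ x t))
      = ∫⁻ t in Set.Ioi (0:ℝ), ∫⁻ x : E3, ENNReal.ofReal (ψ x t) := by
    apply lintegral_lintegral_swap
    apply Measurable.aemeasurable
    apply Measurable.ennreal_ofReal
    have hcψ : Continuous fun p : E3 × ℝ => ψ p.1 p.2 := by
      rw [hψ]
      simp only
      apply Continuous.mul
      · fun_prop
      · apply Continuous.mul
        · apply Continuous.rpow_const
          · apply continuous_const.div (by fun_prop)
            intro p; positivity
          · intro p; right; norm_num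
        · apply Real.continuous_exp.comp
          apply Continuous.mul _ (by fun_prop)
          apply Continuous.neg
          apply Continuous.div (by fun_prop) (by fun_prop)
          intro p; positivity
    exact hcψ.measurable
  rw [hswap2]
  rw [lintegral_congr fun t => L4 t]
  rw [← MeasureTheory.ofReal_integral_eq_lintegral_ofReal hIint
    (Filter.Eventually.of_forall hInn)]
  rw [ENNReal.toReal_ofReal (MeasureTheory.setIntegral_nonneg measurableSet_Ioi
    (fun t _ => hInn t))]


end main


lemma I_value {k s R : ℝ} (hk : 0 < k) (hs : 0 < s) (hR : 0 < R) :
    ∫ t in Set.Ioi (0:ℝ), (k / (k + s * t ^ 2)) ^ ((3:ℝ)/2)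
        * rexp (-(k * t ^ 2 / (k + s * t ^ 2)) * R ^ 2)
      = (1 / R) * ∫ v in (0:ℝ)..(R * Real.sqrt k / Real.sqrt s), rexp (-v ^ 2) := by
  set u : ℝ → ℝ := fun t => R * Real.sqrt k * t / Real.sqrt (k + s * t ^ 2) with hu
  set u' : ℝ → ℝ := fun t => R * (k / (k + s * t ^ 2)) ^ ((3:ℝ)/2) with hu'
  have hden : ∀ t : ℝ, (0:ℝ) < k + s * t ^ 2 := fun t => by positivity
  have hderiv : ∀ t : ℝ, HasDerivAt u (u' t) t := by
    intro t
    have h1 : HasDerivAt (fun t : ℝ => k + s * t ^ 2) (2 * s * t) t := by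
      have := ((hasDerivAt_pow 2 t).const_mul s).const_add k
      refine this.congr_deriv ?_
      norm_num
      ring
    have h2 : HasDerivAt (fun t : ℝ => Real.sqrt (k + s * t ^ 2))
        (2 * s * t / (2 * Real.sqrt (k + s * t ^ 2))) t := h1.sqrt (hden t).ne'
    have h3 : HasDerivAt (fun t : ℝ => R * Real.sqrt k * t) (R * Real.sqrt k) t := by
      simpa using (hasDerivAt_id t).const_mul (R * Real.sqrt k)
    have hsq : Real.sqrt (k + s * t ^ 2) ≠ 0 := by positivity
    have h4 := h3.div h2 hsq
    refine (h4.congr_deriv ?_ : HasDerivAt u _ t)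
    symm
    rw [hu']
    simp only
    rw [rpow_three_div_two (by positivity : (0:ℝ) ≤ k / (k + s * t ^ 2))]
    rw [show (k / (k + s * t ^ 2)) ^ ((1:ℝ)/2) = Real.sqrt (k / (k + s * t ^ 2)) from
      (Real.sqrt_eq_rpow _).symm]
    rw [Real.sqrt_div hk.le]
    have hsk : Real.sqrt (k + s * t ^ 2) ^ 2 = k + s * t ^ 2 := Real.sq_sqrt (hden t).le
    have hkk : Real.sqrt k ^ 2 = k := Real.sq_sqrt hk.le
    set S := Real.sqrt (k + s * t ^ 2) with hS
    rw [← hsk]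
    field_simp
    linear_combination (-1) * hsk
  have hgcont : Continuous fun v : ℝ => rexp (-v ^ 2) := by fun_prop
  have hu'cont : Continuous u' := by
    rw [hu']
    apply continuous_const.mul
    apply Continuous.rpow_const
    · exact continuous_const.div (by fun_prop) (fun t => (hden t).ne')
    · intro t; right; norm_num
  have husq : ∀ t : ℝ, (u t) ^ 2 = k * t ^ 2 / (k + s * t ^ 2) * R ^ 2 := by
    intro t
    rw [hu]
    simp only
    rw [div_pow, mul_pow, mul_pow, Real.sq_sqrt (hden t).le, Real.sq_sqrt hk.le]
    ring
  have key : ∀ T : ℝ, (∫ t in (0:ℝ)..T, (k / (k + s * t ^ 2)) ^ ((3:ℝ)/2)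
      * rexp (-(k * t ^ 2 / (k + s * t ^ 2)) * R ^ 2))
      = (1/R) * ∫ v in (0:ℝ)..(u T), rexp (-v ^ 2) := by
    intro T
    have hcomp := intervalIntegral.integral_comp_mul_deriv (f := u) (f' := u')
      (g := fun v => rexp (-v ^ 2)) (a := 0) (b := T)
      (fun x _ => hderiv x) hu'cont.continuousOn hgcont
    have hu0 : u 0 = 0 := by rw [hu]; simp
    rw [hu0] at hcomp
    rw [← hcomp, ← intervalIntegral.integral_const_mul]
    apply intervalIntegral.integral_congr
    intro x _
    simp only [Function.comp_apply]
    rw [hu']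
    simp only
    rw [show -(u x) ^ 2 = -(k * x ^ 2 / (k + s * x ^ 2) * R ^ 2) by rw [husq x]]
    rw [show -(k * x ^ 2 / (k + s * x ^ 2) * R ^ 2)
        = -(k * x ^ 2 / (k + s * x ^ 2)) * R ^ 2 by ring]
    field_simp
  have hecont : Continuous fun t : ℝ => -(k * t ^ 2 / (k + s * t ^ 2)) * R ^ 2 := by
    apply Continuous.mul _ continuous_const
    apply Continuous.neg
    exact Continuous.div (by fun_prop) (by fun_prop) (fun t => (hden t).ne')
  have he0 : ∀ t : ℝ, -(k * t ^ 2 / (k + s * t ^ 2)) * R ^ 2 ≤ 0 := by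
    intro t
    apply mul_nonpos_of_nonpos_of_nonneg _ (by positivity)
    have : (0:ℝ) ≤ k * t ^ 2 / (k + s * t ^ 2) := by positivity
    linarith
  have hIOint : IntegrableOn (fun t : ℝ => (k / (k + s * t ^ 2)) ^ ((3:ℝ)/2)
      * rexp (-(k * t ^ 2 / (k + s * t ^ 2)) * R ^ 2)) (Set.Ioi 0) :=
    integrable_gen hk hk hs hecont he0
  have hLHS := MeasureTheory.intervalIntegral_tendsto_integral_Ioi 0 hIOint tendsto_id
  have hulim : Tendsto u atTop (nhds (R * Real.sqrt k / Real.sqrt s)) := by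
    have h1 : ∀ᶠ T in atTop, R * Real.sqrt k / Real.sqrt (k / T ^ 2 + s) = u T := by
      filter_upwards [eventually_gt_atTop (0:ℝ)] with T hT
      rw [hu]
      simp only
      rw [show k + s * T ^ 2 = (k / T ^ 2 + s) * T ^ 2 by field_simp]
      rw [Real.sqrt_mul (by positivity) (T ^ 2), Real.sqrt_sq hT.le]
      field_simp
    have h2 : Tendsto (fun T : ℝ => k / T ^ 2 + s) atTop (nhds s) := by
      have hz : Tendsto (fun T : ℝ => k / T ^ 2) atTop (nhds 0) :=
        Tendsto.div_atTop tendsto_const_nhds (tendsto_pow_atTop two_ne_zero)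
      simpa using hz.add tendsto_const_nhds
    have h3 : Tendsto (fun T : ℝ => R * Real.sqrt k / Real.sqrt (k / T ^ 2 + s)) atTop
        (nhds (R * Real.sqrt k / Real.sqrt s)) := by
      apply Tendsto.div tendsto_const_nhds ((Real.continuous_sqrt.tendsto s).comp h2)
      positivity
    exact h3.congr' h1
  have hprim : Continuous fun v : ℝ => ∫ x in (0:ℝ)..v, rexp (-x ^ 2) :=
    intervalIntegral.continuous_primitive (fun a b => hgcont.intervalIntegrable a b) 0
  have hRHS : Tendsto (fun T : ℝ => (1/R) * ∫ v in (0:ℝ)..(u T), rexp (-v ^ 2)) atTop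
      (nhds ((1/R) * ∫ v in (0:ℝ)..(R * Real.sqrt k / Real.sqrt s), rexp (-v ^ 2))) :=
    Tendsto.const_mul _ ((hprim.tendsto _).comp hulim)
  refine tendsto_nhds_unique ?_ hRHS
  refine hLHS.congr fun T => ?_
  exact key T

-- erf facts
lemma gauss_integrableOn : IntegrableOn (fun v : ℝ => rexp (-v ^ 2)) (Set.Ioi 0) :=
  ((integrable_exp_neg_mul_sq one_pos).congr
    (Filter.Eventually.of_forall fun x => by norm_num)).integrableOn

lemma gauss_integral_Ioi : ∫ v in Set.Ioi (0:ℝ), rexp (-v ^ 2) = Real.sqrt π / 2 := by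
  have h := integral_gaussian_Ioi 1
  simp only [one_mul, neg_mul, div_one] at h
  rw [← h]

lemma erf_pos {x : ℝ} (hx : 0 < x) : 0 < erf x := by
  unfold erf
  apply mul_pos (by positivity)
  exact intervalIntegral.intervalIntegral_pos_of_pos_on
    ((Continuous.intervalIntegrable (by fun_prop) _ _))
    (fun t _ => Real.exp_pos _) hx

lemma erf_le_one {x : ℝ} (hx : 0 < x) : erf x ≤ 1 := by
  unfold erf
  have h1 : (∫ t in (0:ℝ)..x, rexp (-t ^ 2)) ≤ ∫ v in Set.Ioi (0:ℝ), rexp (-v ^ 2) := by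
    rw [intervalIntegral.integral_of_le hx.le]
    exact MeasureTheory.setIntegral_mono_set gauss_integrableOn
      (Filter.Eventually.of_forall fun v => (Real.exp_pos _).le)
      (HasSubset.Subset.eventuallyLE Set.Ioc_subset_Ioi_self)
  rw [gauss_integral_Ioi] at h1
  have h2 : (2 / Real.sqrt π) * (∫ t in (0:ℝ)..x, rexp (-t ^ 2))
      ≤ (2 / Real.sqrt π) * (Real.sqrt π / 2) :=
    mul_le_mul_of_nonneg_left h1 (by positivity)
  have h3 : (2 / Real.sqrt π) * (Real.sqrt π / 2) = 1 := by
    have : Real.sqrt π ≠ 0 := by positivity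
    field_simp
  linarith

lemma erf_tendsto_one : Tendsto erf atTop (nhds 1) := by
  have h := MeasureTheory.intervalIntegral_tendsto_integral_Ioi 0 gauss_integrableOn tendsto_id
  rw [gauss_integral_Ioi] at h
  have h2 := h.const_mul (2 / Real.sqrt π)
  have h3 : (2 / Real.sqrt π) * (Real.sqrt π / 2) = 1 := by
    have : Real.sqrt π ≠ 0 := by positivity
    field_simp
  rw [h3] at h2
  exact h2.congr fun x => rfl

-- closed form
lemma coulombJ_closed {α β : ℝ} (hα : 0 < α) (hβ : 0 < β) (A B : E3) (hAB : A ≠ B) :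
    coulombJ α β A B = erf (Real.sqrt (α * β / (α + β)) * ‖A - B‖) / ‖A - B‖ := by
  have hR : (0:ℝ) < ‖A - B‖ := by
    rw [norm_pos_iff, sub_ne_zero]; exact hAB
  rw [coulombJ_eq_integral hα hβ A B, MeasureTheory.integral_const_mul,
    I_value (mul_pos hα hβ) (by positivity : (0:ℝ) < α + β) hR]
  rw [show Real.sqrt (α * β / (α + β)) * ‖A - B‖
      = ‖A - B‖ * Real.sqrt (α * β) / Real.sqrt (α + β) by
    rw [Real.sqrt_div (mul_pos hα hβ).le]; ring]
  unfold erf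
  ring

theorem coulomb_gaussians (α β : ℝ) (hα : 0 < α) (hβ : 0 < β) :
    (∀ A B : EuclideanSpace ℝ (Fin 3), A ≠ B →
      coulombJ α β A B = erf (Real.sqrt (α * β / (α + β)) * ‖A - B‖) / ‖A - B‖ ∧
      0 < coulombJ α β A B ∧ coulombJ α β A B ≤ 1 / ‖A - B‖) ∧
    Tendsto
      (fun p : EuclideanSpace ℝ (Fin 3) × EuclideanSpace ℝ (Fin 3) =>
        coulombJ α β p.1 p.2 * ‖p.1 - p.2‖)
      (Filter.comap (fun p : EuclideanSpace ℝ (Fin 3) × EuclideanSpace ℝ (Fin 3) =>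
        ‖p.1 - p.2‖) atTop)
      (nhds 1) := by
  have hγ : (0:ℝ) < α * β / (α + β) := by positivity
  have hsγ : (0:ℝ) < Real.sqrt (α * β / (α + β)) := Real.sqrt_pos.mpr hγ
  constructor
  · intro A B hAB
    have hR : (0:ℝ) < ‖A - B‖ := by
      rw [norm_pos_iff, sub_ne_zero]; exact hAB
    have hcl := coulombJ_closed hα hβ A B hAB
    have harg : 0 < Real.sqrt (α * β / (α + β)) * ‖A - B‖ := mul_pos hsγ hR
    refine ⟨hcl, ?_, ?_⟩
    · rw [hcl]; exact div_pos (erf_pos harg) hR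
    · rw [hcl]; gcongr; exact erf_le_one harg
  · have h1 : Tendsto (fun p : E3 × E3 => ‖p.1 - p.2‖)
        (Filter.comap (fun p : E3 × E3 => ‖p.1 - p.2‖) atTop) atTop := tendsto_comap
    have hev : ∀ᶠ p : E3 × E3 in Filter.comap (fun p : E3 × E3 => ‖p.1 - p.2‖) atTop,
        1 ≤ ‖p.1 - p.2‖ := h1.eventually (eventually_ge_atTop 1)
    have heq : ∀ᶠ p : E3 × E3 in Filter.comap (fun p : E3 × E3 => ‖p.1 - p.2‖) atTop,
        erf (Real.sqrt (α * β / (α + β)) * ‖p.1 - p.2‖)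
          = coulombJ α β p.1 p.2 * ‖p.1 - p.2‖ := by
      filter_upwards [hev] with p hp
      have hne : p.1 ≠ p.2 := by
        intro h
        rw [h, sub_self, norm_zero] at hp
        linarith
      have hR : ‖p.1 - p.2‖ ≠ 0 := by
        have : (0:ℝ) < ‖p.1 - p.2‖ := by linarith
        exact this.ne'
      rw [coulombJ_closed hα hβ p.1 p.2 hne, div_mul_cancel₀ _ hR]
    have htend : Tendsto (fun p : E3 × E3 =>
        erf (Real.sqrt (α * β / (α + β)) * ‖p.1 - p.2‖))
        (Filter.comap (fun p : E3 × E3 => ‖p.1 - p.2‖) atTop) (nhds 1) :=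
      erf_tendsto_one.comp (h1.const_mul_atTop hsγ)
    exact htend.congr' heq
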